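/- Let n be an odd positive integer, q a primitive n-th root of unity, and define operators X, Y on ℂ^n with basis e₀,…,e_{n−1} by X e_i = q^i e_i and Y e_i = e_{i+1} (indices mod n). Let V₁ = span⟨e₀, e₁+e_{n−1}, e₂+e_{n−2}, …, e_{(n−1)/2}+e_{(n+1)/2}⟩ and V₂ = span⟨e₁−e_{n−1}, e₂−e_{n−2}, …, e_{(n−1)/2}−e_{(n+1)/2}⟩. Then ℂ^n = V₁ ⊕ V₂, dim V₁ = (n+1)/2, dim V₂ = (n−1)/2, and both V₁ and V₂ are invariant under the subalgebra of End(ℂ^n) spanned by the elements X^aY^b + X^{-a}Y^{-b} for (a,b) ∈ ℤ². -/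

import Mathlib

noncomputable def sigE (n : ℕ) : Module.End ℂ (Fin n → ℂ) :=
  LinearMap.funLeft ℂ ℂ (fun i : Fin n => -i)

lemma sigE_apply (n : ℕ) (f : Fin n → ℂ) (j : Fin n) : sigE n f j = f (-j) := rfl

lemma sigE_single (n : ℕ) (i : Fin n) :
    sigE n (Pi.single i 1) = Pi.single (-i) 1 := by
  funext j
  simp [sigE_apply, Pi.single_apply, neg_eq_iff_eq_neg]

lemma sigE_mul_self (n : ℕ) : sigE n * sigE n = 1 := by
  refine LinearMap.ext fun f => funext fun j => ?_
  simp only [Module.End.mul_apply, Module.End.one_apply, sigE_apply, neg_neg]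

noncomputable def W1 (n : ℕ) : Submodule ℂ (Fin n → ℂ) where
  carrier := {f | ∀ i, f (-i) = f i}
  add_mem' := fun ha hb i => by simp [Pi.add_apply, ha i, hb i]
  zero_mem' := fun i => rfl
  smul_mem' := fun c f hf i => by simp [Pi.smul_apply, hf i]

noncomputable def W2 (n : ℕ) : Submodule ℂ (Fin n → ℂ) where
  carrier := {f | ∀ i, f (-i) = - f i}
  add_mem' := fun ha hb i => by simp [Pi.add_apply, ha i, hb i]; ring
  zero_mem' := fun i => by simp
  smul_mem' := fun c f hf i => by simp [Pi.smul_apply, hf i]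

lemma mem_W1 (n : ℕ) (f : Fin n → ℂ) : f ∈ W1 n ↔ ∀ i, f (-i) = f i := Iff.rfl
lemma mem_W2 (n : ℕ) (f : Fin n → ℂ) : f ∈ W2 n ↔ ∀ i, f (-i) = - f i := Iff.rfl

lemma span_eq_W1 (n : ℕ) :
    Submodule.span ℂ (Set.range fun i : Fin n =>
      (Pi.single i 1 : Fin n → ℂ) + Pi.single (-i) 1) = W1 n := by
  apply le_antisymm
  · rw [Submodule.span_le]
    rintro _ ⟨i, rfl⟩
    refine (mem_W1 n _).mpr fun j => ?_
    simp only [Pi.add_apply, Pi.single_apply, neg_eq_iff_eq_neg, neg_neg, neg_inj]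
    exact add_comm _ _
  · intro f hf
    have hrep : f = ∑ i : Fin n, (f i / 2) •
        ((Pi.single i 1 : Fin n → ℂ) + Pi.single (-i) 1) := by
      funext j
      rw [Finset.sum_apply]
      have key : ∀ i : Fin n, ((j = -i) = (i = -j)) := fun i =>
        propext ⟨fun h => by rw [h, neg_neg], fun h => by rw [h, neg_neg]⟩
      simp only [Pi.smul_apply, Pi.add_apply, Pi.single_apply, smul_eq_mul, mul_add,
        mul_ite, mul_one, mul_zero, Finset.sum_add_distrib, key,
        Finset.sum_ite_eq, Finset.sum_ite_eq', Finset.mem_univ, if_true]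
      rw [(mem_W1 n f).mp hf j]
      ring
    rw [hrep]
    exact Submodule.sum_mem _ fun i _ =>
      Submodule.smul_mem _ _ (Submodule.subset_span ⟨i, rfl⟩)

lemma span_eq_W2 (n : ℕ) :
    Submodule.span ℂ (Set.range fun i : Fin n =>
      (Pi.single i 1 : Fin n → ℂ) - Pi.single (-i) 1) = W2 n := by
  apply le_antisymm
  · rw [Submodule.span_le]
    rintro _ ⟨i, rfl⟩
    refine (mem_W2 n _).mpr fun j => ?_
    simp only [Pi.sub_apply, Pi.single_apply, neg_eq_iff_eq_neg, neg_neg, neg_inj]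
    ring
  · intro f hf
    have hrep : f = ∑ i : Fin n, (f i / 2) •
        ((Pi.single i 1 : Fin n → ℂ) - Pi.single (-i) 1) := by
      funext j
      rw [Finset.sum_apply]
      have key : ∀ i : Fin n, ((j = -i) = (i = -j)) := fun i =>
        propext ⟨fun h => by rw [h, neg_neg], fun h => by rw [h, neg_neg]⟩
      simp only [Pi.smul_apply, Pi.sub_apply, Pi.single_apply, smul_eq_mul, mul_sub,
        mul_ite, mul_one, mul_zero, Finset.sum_sub_distrib, key,
        Finset.sum_ite_eq, Finset.sum_ite_eq', Finset.mem_univ, if_true]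
      rw [(mem_W2 n f).mp hf j]
      ring
    rw [hrep]
    exact Submodule.sum_mem _ fun i _ =>
      Submodule.smul_mem _ _ (Submodule.subset_span ⟨i, rfl⟩)

lemma finrank_W1 (n : ℕ) [NeZero n] (hn : Odd n) : Module.finrank ℂ (W1 n) = (n + 1) / 2 := by
  obtain ⟨m, hm⟩ := hn
  have hfin : ∀ i : Fin n, i ≠ 0 → ((-i : Fin n) : ℕ) = n - (i : ℕ) := by
    intro i hi
    have hi' : (i : ℕ) ≠ 0 := fun hc => hi (Fin.ext (by simpa using hc))
    have := i.isLt
    rw [Fin.coe_neg]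
    exact Nat.mod_eq_of_lt (by omega)
  let r : W1 n →ₗ[ℂ] (Fin ((n + 1) / 2) → ℂ) :=
    (LinearMap.funLeft ℂ ℂ (fun j : Fin ((n + 1) / 2) =>
      (⟨j.val, by have := j.isLt; omega⟩ : Fin n))).comp (W1 n).subtype
  have hbij : Function.Bijective r := by
    constructor
    · rintro ⟨f, hf⟩ ⟨g, hg⟩ h
      have hlt : ∀ i : Fin n, (i : ℕ) < (n + 1) / 2 → f i = g i := by
        intro i hi
        have := congrFun h ⟨(i : ℕ), hi⟩
        simpa [r] using this
      apply Subtype.ext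
      funext i
      show f i = g i
      by_cases hi : (i : ℕ) < (n + 1) / 2
      · exact hlt i hi
      · have h0 : i ≠ 0 := by
          intro hc; subst hc; simp at hi; omega
        have hv := hfin i h0
        have hlt' : ((-i : Fin n) : ℕ) < (n + 1) / 2 := by
          have := i.isLt; omega
        have hfi : f i = f (-i) := by
          have := (mem_W1 n f).mp hf (-i); rwa [neg_neg] at this
        have hgi : g i = g (-i) := by
          have := (mem_W1 n g).mp hg (-i); rwa [neg_neg] at this
        rw [hfi, hgi, hlt _ hlt']
    · intro g
      refine ⟨⟨fun i => g ⟨min (i : ℕ) (n - (i : ℕ)), by have := i.isLt; omega⟩, ?_⟩, ?_⟩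
      · intro i
        dsimp only
        by_cases h0 : i = 0
        · subst h0; rw [neg_zero]
        · exact congrArg g (Fin.ext (by
            simp only [hfin i h0]
            have := i.isLt
            omega))
      · funext j
        exact congrArg g (Fin.ext (by
          have := j.isLt
          simp only []
          omega))
  rw [LinearEquiv.finrank_eq (LinearEquiv.ofBijective r hbij), Module.finrank_pi,
    Fintype.card_fin]

lemma finrank_W2 (n : ℕ) [NeZero n] (hn : Odd n) : Module.finrank ℂ (W2 n) = (n - 1) / 2 := by
  obtain ⟨m, hm⟩ := id hn
  have hker : LinearMap.ker (1 - sigE n) = W1 n := by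
    ext f
    rw [LinearMap.mem_ker, mem_W1]
    constructor
    · intro h i
      have := congrFun h i
      simp only [LinearMap.sub_apply, Module.End.one_apply, sigE_apply, Pi.sub_apply,
        Pi.zero_apply] at this
      exact (sub_eq_zero.mp this).symm
    · intro h
      funext i
      simp only [LinearMap.sub_apply, Module.End.one_apply, sigE_apply, Pi.sub_apply,
        Pi.zero_apply, h i, sub_self]
  have hrange : LinearMap.range (1 - sigE n) = W2 n := by
    ext f
    constructor
    · rintro ⟨g, rfl⟩
      refine (mem_W2 n _).mpr fun i => ?_
      simp only [LinearMap.sub_apply, Module.End.one_apply, sigE_apply, Pi.sub_apply, neg_neg]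
      ring
    · intro hf
      refine ⟨(1/2 : ℂ) • f, ?_⟩
      funext i
      simp only [LinearMap.sub_apply, Module.End.one_apply, sigE_apply, Pi.sub_apply,
        Pi.smul_apply, smul_eq_mul, (mem_W2 n f).mp hf i]
      ring
  have h := LinearMap.finrank_range_add_finrank_ker (1 - sigE n)
  rw [hker, hrange, Module.finrank_fin_fun, finrank_W1 n hn] at h
  omega

theorem stmt_11 (n : ℕ) [NeZero n] (hn : Odd n) (q : ℂ) (hq : IsPrimitiveRoot q n)
    (X Y : (Module.End ℂ (Fin n → ℂ))ˣ)
    (hX : ∀ i : Fin n, (X : Module.End ℂ (Fin n → ℂ)) (Pi.single i 1) =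
      (q ^ (i : ℕ)) • (Pi.single i 1 : Fin n → ℂ))
    (hY : ∀ i : Fin n, (Y : Module.End ℂ (Fin n → ℂ)) (Pi.single i 1) =
      (Pi.single (i + 1) 1 : Fin n → ℂ)) :
    let V₁ : Submodule ℂ (Fin n → ℂ) :=
      Submodule.span ℂ (Set.range fun i : Fin n =>
        (Pi.single i 1 : Fin n → ℂ) + Pi.single (-i) 1)
    let V₂ : Submodule ℂ (Fin n → ℂ) :=
      Submodule.span ℂ (Set.range fun i : Fin n =>
        (Pi.single i 1 : Fin n → ℂ) - Pi.single (-i) 1)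
    V₁ ⊔ V₂ = ⊤ ∧ V₁ ⊓ V₂ = ⊥ ∧
      Module.finrank ℂ V₁ = (n + 1) / 2 ∧ Module.finrank ℂ V₂ = (n - 1) / 2 ∧
      (∀ a b : ℤ, ∀ w ∈ V₁,
        ((X ^ a * Y ^ b : (Module.End ℂ (Fin n → ℂ))ˣ) : Module.End ℂ (Fin n → ℂ)) w +
          ((X ^ (-a) * Y ^ (-b) : (Module.End ℂ (Fin n → ℂ))ˣ) : Module.End ℂ (Fin n → ℂ)) w
          ∈ V₁) ∧
      (∀ a b : ℤ, ∀ w ∈ V₂,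
        ((X ^ a * Y ^ b : (Module.End ℂ (Fin n → ℂ))ˣ) : Module.End ℂ (Fin n → ℂ)) w +
          ((X ^ (-a) * Y ^ (-b) : (Module.End ℂ (Fin n → ℂ))ˣ) : Module.End ℂ (Fin n → ℂ)) w
          ∈ V₂) := by
  intro V₁ V₂
  have hV1 : V₁ = W1 n := span_eq_W1 n
  have hV2 : V₂ = W2 n := span_eq_W2 n
  -- the operator facts
  have hq0 : q ≠ 0 := hq.ne_zero (NeZero.ne n)
  have hqsum : ∀ i : Fin n, q ^ ((i : ℕ) + ((-i : Fin n) : ℕ)) = 1 := by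
    intro i
    by_cases h0 : i = 0
    · subst h0; simp
    · have hi' : (i : ℕ) ≠ 0 := fun hc => h0 (Fin.ext (by simpa using hc))
      have hiv := i.isLt
      have hv : ((-i : Fin n) : ℕ) = n - (i : ℕ) := by
        rw [Fin.coe_neg]; exact Nat.mod_eq_of_lt (by omega)
      rw [hv, show ((i : ℕ) + (n - (i : ℕ))) = n by omega]
      exact hq.pow_eq_one
  have hXinv : ∀ i : Fin n, ((X⁻¹ : (Module.End ℂ (Fin n → ℂ))ˣ) : Module.End ℂ (Fin n → ℂ))
      (Pi.single i 1) = (q ^ (i : ℕ))⁻¹ • (Pi.single i 1 : Fin n → ℂ) := by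
    intro i
    have h1 : ((X⁻¹ : (Module.End ℂ (Fin n → ℂ))ˣ) : Module.End ℂ (Fin n → ℂ))
        ((X : Module.End ℂ (Fin n → ℂ)) (Pi.single i 1)) = Pi.single i 1 := by
      rw [← Module.End.mul_apply, ← Units.val_mul, inv_mul_cancel, Units.val_one,
        Module.End.one_apply]
    rw [hX i, map_smul] at h1
    calc ((X⁻¹ : (Module.End ℂ (Fin n → ℂ))ˣ) : Module.End ℂ (Fin n → ℂ)) (Pi.single i 1)
        = (q ^ (i : ℕ))⁻¹ • ((q ^ (i : ℕ)) •
          ((X⁻¹ : (Module.End ℂ (Fin n → ℂ))ˣ) : Module.End ℂ (Fin n → ℂ)) (Pi.single i 1)) := by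
          rw [smul_smul, inv_mul_cancel₀ (pow_ne_zero _ hq0), one_smul]
      _ = (q ^ (i : ℕ))⁻¹ • (Pi.single i 1 : Fin n → ℂ) := by rw [h1]
  have hYinv : ∀ i : Fin n, ((Y⁻¹ : (Module.End ℂ (Fin n → ℂ))ˣ) : Module.End ℂ (Fin n → ℂ))
      (Pi.single i 1) = (Pi.single (i - 1) 1 : Fin n → ℂ) := by
    intro i
    have h1 : ((Y⁻¹ : (Module.End ℂ (Fin n → ℂ))ˣ) : Module.End ℂ (Fin n → ℂ))
        ((Y : Module.End ℂ (Fin n → ℂ)) (Pi.single (i - 1) 1)) = Pi.single (i - 1) 1 := by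
      rw [← Module.End.mul_apply, ← Units.val_mul, inv_mul_cancel, Units.val_one,
        Module.End.one_apply]
    rw [hY (i - 1), show i - 1 + 1 = i by abel] at h1
    exact h1
  have hsigX : sigE n * (X : Module.End ℂ (Fin n → ℂ)) =
      ((X⁻¹ : (Module.End ℂ (Fin n → ℂ))ˣ) : Module.End ℂ (Fin n → ℂ)) * sigE n := by
    refine Module.Basis.ext (Pi.basisFun ℂ (Fin n)) fun i => ?_
    rw [Pi.basisFun_apply, Module.End.mul_apply, Module.End.mul_apply, hX i, map_smul,
      sigE_single, hXinv (-i)]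
    have hmul : q ^ (i : ℕ) * q ^ ((-i : Fin n) : ℕ) = 1 := by
      rw [← pow_add]; exact hqsum i
    congr 1
    exact eq_inv_of_mul_eq_one_left hmul
  have hsigY : sigE n * (Y : Module.End ℂ (Fin n → ℂ)) =
      ((Y⁻¹ : (Module.End ℂ (Fin n → ℂ))ˣ) : Module.End ℂ (Fin n → ℂ)) * sigE n := by
    refine Module.Basis.ext (Pi.basisFun ℂ (Fin n)) fun i => ?_
    rw [Pi.basisFun_apply, Module.End.mul_apply, Module.End.mul_apply, hY i,
      sigE_single, sigE_single, hYinv (-i)]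
    exact congrArg (fun t : Fin n => (Pi.single t 1 : Fin n → ℂ)) (by abel)
  -- the symmetry operator as a unit
  let S : (Module.End ℂ (Fin n → ℂ))ˣ := ⟨sigE n, sigE n, sigE_mul_self n, sigE_mul_self n⟩
  have hSX : S * X = X⁻¹ * S := by
    apply Units.ext
    rw [Units.val_mul, Units.val_mul]
    exact hsigX
  have hSY : S * Y = Y⁻¹ * S := by
    apply Units.ext
    rw [Units.val_mul, Units.val_mul]
    exact hsigY
  have key : ∀ a b : ℤ, sigE n * ((X ^ a * Y ^ b : (Module.End ℂ (Fin n → ℂ))ˣ) :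
      Module.End ℂ (Fin n → ℂ)) =
      ((X ^ (-a) * Y ^ (-b) : (Module.End ℂ (Fin n → ℂ))ˣ) :
        Module.End ℂ (Fin n → ℂ)) * sigE n := by
    intro a b
    have hx : S * X ^ a = X ^ (-a) * S := by
      have := (show SemiconjBy S X X⁻¹ from hSX).zpow_right a
      rwa [inv_zpow, ← zpow_neg] at this
    have hy : S * Y ^ b = Y ^ (-b) * S := by
      have := (show SemiconjBy S Y Y⁻¹ from hSY).zpow_right b
      rwa [inv_zpow, ← zpow_neg] at this
    have hu : S * (X ^ a * Y ^ b) = (X ^ (-a) * Y ^ (-b)) * S := by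
      rw [← mul_assoc, hx, mul_assoc, hy, ← mul_assoc]
    have := congrArg Units.val hu
    rwa [Units.val_mul, Units.val_mul] at this
  refine ⟨?_, ?_, ?_, ?_, ?_, ?_⟩
  · -- sup
    rw [hV1, hV2, eq_top_iff]
    rintro f -
    refine Submodule.mem_sup.mpr ⟨fun i => (f i + f (-i)) / 2, ?_, fun i => (f i - f (-i)) / 2,
      ?_, ?_⟩
    · exact (mem_W1 n _).mpr fun j => by rw [neg_neg]; ring
    · exact (mem_W2 n _).mpr fun j => by rw [neg_neg]; ring
    · funext i
      show (f i + f (-i)) / 2 + (f i - f (-i)) / 2 = f i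
      ring
  · -- inf
    rw [hV1, hV2, eq_bot_iff]
    intro f hf
    obtain ⟨h1, h2⟩ := Submodule.mem_inf.mp hf
    rw [Submodule.mem_bot]
    funext i
    have h3 : (2 : ℂ) * f i = 0 := by
      linear_combination ((mem_W2 n f).mp h2 i) - ((mem_W1 n f).mp h1 i)
    have h4 : f i = 0 := (mul_eq_zero.mp h3).resolve_left two_ne_zero
    simpa using h4
  · rw [hV1]; exact finrank_W1 n hn
  · rw [hV2]; exact finrank_W2 n hn
  · -- invariance of V₁
    intro a b w hw
    rw [hV1] at hw ⊢
    have hsw : sigE n w = w := funext fun i => (mem_W1 n w).mp hw i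
    set A := ((X ^ a * Y ^ b : (Module.End ℂ (Fin n → ℂ))ˣ) : Module.End ℂ (Fin n → ℂ)) with hA
    set B := ((X ^ (-a) * Y ^ (-b) : (Module.End ℂ (Fin n → ℂ))ˣ) :
      Module.End ℂ (Fin n → ℂ)) with hB
    have e1 : sigE n (A w) = B w := by
      rw [← Module.End.mul_apply, key a b, Module.End.mul_apply, hsw]
    have e2 : sigE n (B w) = A w := by
      have k2 := key (-a) (-b)
      rw [neg_neg, neg_neg] at k2
      rw [← Module.End.mul_apply, k2, Module.End.mul_apply, hsw]
    have h : sigE n (A w + B w) = A w + B w := by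
      rw [map_add, e1, e2, add_comm]
    exact (mem_W1 n _).mpr fun i => congrFun h i
  · -- invariance of V₂
    intro a b w hw
    rw [hV2] at hw ⊢
    have hsw : sigE n w = -w := funext fun i => (mem_W2 n w).mp hw i
    set A := ((X ^ a * Y ^ b : (Module.End ℂ (Fin n → ℂ))ˣ) : Module.End ℂ (Fin n → ℂ)) with hA
    set B := ((X ^ (-a) * Y ^ (-b) : (Module.End ℂ (Fin n → ℂ))ˣ) :
      Module.End ℂ (Fin n → ℂ)) with hB
    have e1 : sigE n (A w) = -(B w) := by
      rw [← Module.End.mul_apply, key a b, Module.End.mul_apply, hsw, map_neg]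
    have e2 : sigE n (B w) = -(A w) := by
      have k2 := key (-a) (-b)
      rw [neg_neg, neg_neg] at k2
      rw [← Module.End.mul_apply, k2, Module.End.mul_apply, hsw, map_neg]
    have h : sigE n (A w + B w) = -(A w + B w) := by
      rw [map_add, e1, e2, neg_add, add_comm]
    exact (mem_W2 n _).mpr fun i => congrFun h i
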